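/- Let N ≥ 1 and I ≥ 1, let D_i : ℝ^N → ℝ^{M_i} be linear maps, let h : ℝ^N → ℝ and f : ℝ^N → (−∞,+∞] be measurable with 0 < ∫_{ℝ^N} exp(−h(x)−f(x)) dx < ∞, and for each i let g_i : ℝ^{M_i} → ℝ be continuous with exp(−g_i) bounded. Let π be the probability measure on ℝ^N with density proportional to x ↦ exp(−h(x)−f(x)−∑_{i=1}^I g_i(D_i x)), and for η = (η_1,…,η_I) ∈ (0,∞)^I let π_η be the probability measure with density proportional to x ↦ exp(−h(x)−f(x)) ∏_{i=1}^I (2πη_i²)^{−M_i/2} ∫_{ℝ^{M_i}} exp(−g_i(z)) exp(−‖D_i x − z‖²/(2η_i²)) dz. Then ‖π − π_η‖_TV → 0 as max_{1≤i≤I} η_i → 0⁺. -/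

import Mathlib

open MeasureTheory Filter Topology
section AuxSec
open Real
set_option maxHeartbeats 1000000

lemma gauss_int (M : ℕ) {b : ℝ} (hb : 0 < b) :
    Integrable (fun v : EuclideanSpace ℝ (Fin M) => Real.exp (-b * ‖v‖^2)) := by
  have h := (GaussianFourier.integrable_cexp_neg_mul_sq_norm_add (V := EuclideanSpace ℝ (Fin M))
    (b := (b : ℂ)) (by simpa using hb) 0 0).norm
  refine h.congr (Filter.Eventually.of_forall fun v => ?_)
  simp [Complex.norm_exp, ← Complex.ofReal_pow]

lemma gauss_val (M : ℕ) {b : ℝ} (hb : 0 < b) :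
    ∫ v : EuclideanSpace ℝ (Fin M), Real.exp (-b * ‖v‖^2) = (π / b) ^ ((M : ℝ) / 2) := by
  rw [GaussianFourier.integral_rexp_neg_mul_sq_norm hb]
  norm_num [finrank_euclideanSpace_fin]

lemma key_id (M : ℕ) (φ : EuclideanSpace ℝ (Fin M) → ℝ) (y : EuclideanSpace ℝ (Fin M))
    {t : ℝ} (ht : 0 < t) :
    (2 * π * t ^ 2) ^ (-(M : ℝ) / 2) * ∫ z, φ z * Real.exp (-‖y - z‖ ^ 2 / (2 * t ^ 2)) =
    (2 * π) ^ (-(M : ℝ) / 2) * ∫ v, φ (y + t • v) * Real.exp (-‖v‖ ^ 2 / 2) := by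
  have hM : (Module.finrank ℝ (EuclideanSpace ℝ (Fin M))) = M := finrank_euclideanSpace_fin
  have h1 : (∫ z, φ z * Real.exp (-‖y - z‖ ^ 2 / (2 * t ^ 2)))
      = ∫ w, φ (y + w) * Real.exp (-‖w‖ ^ 2 / (2 * t ^ 2)) := by
    rw [← integral_add_left_eq_self (fun z => φ z * Real.exp (-‖y - z‖ ^ 2 / (2 * t ^ 2))) y]
    refine integral_congr_ae (Filter.Eventually.of_forall fun w => ?_)
    have : y - (y + w) = -w := by abel
    simp [this]
  have h2 : (∫ w, φ (y + w) * Real.exp (-‖w‖ ^ 2 / (2 * t ^ 2)))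
      = t ^ M * ∫ v, φ (y + t • v) * Real.exp (-‖v‖ ^ 2 / 2) := by
    have h := MeasureTheory.Measure.integral_comp_smul_of_nonneg (volume)
      (fun w => φ (y + w) * Real.exp (-‖w‖ ^ 2 / (2 * t ^ 2))) t (hR := ht.le)
    rw [hM] at h
    have h' : (∫ v, φ (y + t • v) * Real.exp (-‖t • v‖ ^ 2 / (2 * t ^ 2)))
        = (t ^ M)⁻¹ * ∫ w, φ (y + w) * Real.exp (-‖w‖ ^ 2 / (2 * t ^ 2)) := h
    have he : ∀ v : EuclideanSpace ℝ (Fin M),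
        Real.exp (-‖t • v‖ ^ 2 / (2 * t ^ 2)) = Real.exp (-‖v‖ ^ 2 / 2) := by
      intro v
      congr 1
      rw [norm_smul, Real.norm_eq_abs, abs_of_pos ht, mul_pow]
      field_simp
    simp only [he] at h'
    rw [h', ← mul_assoc, mul_inv_cancel₀ (by positivity), one_mul]
  have h3 : (2 * π * t ^ 2) ^ (-(M : ℝ) / 2) * t ^ M = (2 * π) ^ (-(M : ℝ) / 2) := by
    rw [Real.mul_rpow (by positivity) (by positivity)]
    have : (t ^ 2 : ℝ) ^ (-(M : ℝ) / 2) = t ^ (-(M : ℝ)) := by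
      rw [← Real.rpow_natCast t 2, ← Real.rpow_mul ht.le]
      congr 1
      ring
    rw [this, mul_assoc, ← Real.rpow_natCast t M, ← Real.rpow_add ht]
    simp
  rw [h1, h2, ← mul_assoc, h3]

lemma gauss2_int (M : ℕ) :
    Integrable (fun v : EuclideanSpace ℝ (Fin M) => Real.exp (-‖v‖ ^ 2 / 2)) := by
  have h := gauss_int M (b := (1/2 : ℝ)) (by norm_num)
  have e : (fun v : EuclideanSpace ℝ (Fin M) => Real.exp (-(1/2 : ℝ) * ‖v‖ ^ 2))
      = fun v : EuclideanSpace ℝ (Fin M) => Real.exp (-‖v‖ ^ 2 / 2) := by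
    funext v
    congr 1
    ring
  rwa [e] at h

lemma gauss2_val (M : ℕ) :
    ∫ v : EuclideanSpace ℝ (Fin M), Real.exp (-‖v‖ ^ 2 / 2) = (2 * π) ^ ((M : ℝ) / 2) := by
  have h := gauss_val M (b := (1/2 : ℝ)) (by norm_num)
  have e : (fun v : EuclideanSpace ℝ (Fin M) => Real.exp (-(1/2 : ℝ) * ‖v‖ ^ 2))
      = fun v : EuclideanSpace ℝ (Fin M) => Real.exp (-‖v‖ ^ 2 / 2) := by
    funext v
    congr 1
    ring
  rw [e] at h
  rw [h]
  have : (π / (1/2 : ℝ)) = 2 * π := by ring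
  rw [this]

lemma gauss2_can (M : ℕ) : (2 * π : ℝ) ^ (-(M : ℝ) / 2) * (2 * π) ^ ((M : ℝ) / 2) = 1 := by
  rw [← Real.rpow_add (by positivity)]
  have : -(M : ℝ) / 2 + (M : ℝ) / 2 = 0 := by ring
  rw [this, Real.rpow_zero]

lemma key_int (M : ℕ) (φ : EuclideanSpace ℝ (Fin M) → ℝ) (hφc : Continuous φ)
    (hφpos : ∀ z, 0 < φ z) {C : ℝ} (hφC : ∀ z, φ z ≤ C)
    (y : EuclideanSpace ℝ (Fin M)) (t : ℝ) :
    Integrable (fun v : EuclideanSpace ℝ (Fin M) =>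
      φ (y + t • v) * Real.exp (-‖v‖ ^ 2 / 2)) := by
  refine Integrable.mono' ((gauss2_int M).const_mul C) ?_ ?_
  · exact Continuous.aestronglyMeasurable (by fun_prop)
  · refine Filter.Eventually.of_forall fun v => ?_
    rw [Real.norm_eq_abs, abs_of_nonneg (mul_nonneg (hφpos _).le (Real.exp_pos _).le)]
    exact mul_le_mul_of_nonneg_right (hφC _) (Real.exp_pos _).le

lemma key_bounds (M : ℕ) (φ : EuclideanSpace ℝ (Fin M) → ℝ) (hφc : Continuous φ)
    (hφpos : ∀ z, 0 < φ z) {C : ℝ} (hφC : ∀ z, φ z ≤ C)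
    (y : EuclideanSpace ℝ (Fin M)) {t : ℝ} (ht : 0 < t) :
    0 < (2 * π * t ^ 2) ^ (-(M : ℝ) / 2) * ∫ z, φ z * Real.exp (-‖y - z‖ ^ 2 / (2 * t ^ 2)) ∧
    (2 * π * t ^ 2) ^ (-(M : ℝ) / 2) * (∫ z, φ z * Real.exp (-‖y - z‖ ^ 2 / (2 * t ^ 2))) ≤ C := by
  rw [key_id M φ y ht]
  have hint := key_int M φ hφc hφpos hφC y t
  have hS : 0 < ∫ v, φ (y + t • v) * Real.exp (-‖v‖ ^ 2 / 2) := by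
    refine (integral_pos_iff_support_of_nonneg
      (fun v => mul_nonneg (hφpos _).le (Real.exp_pos _).le) hint).2 ?_
    have : Function.support (fun v : EuclideanSpace ℝ (Fin M) =>
        φ (y + t • v) * Real.exp (-‖v‖ ^ 2 / 2)) = Set.univ :=
      Set.eq_univ_of_forall fun v => (mul_pos (hφpos _) (Real.exp_pos _)).ne'
    rw [this]
    exact isOpen_univ.measure_pos volume ⟨0, trivial⟩
  have hSle : (∫ v, φ (y + t • v) * Real.exp (-‖v‖ ^ 2 / 2)) ≤ C * (2 * π) ^ ((M : ℝ) / 2) := by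
    rw [← gauss2_val M, ← integral_const_mul]
    exact integral_mono hint ((gauss2_int M).const_mul C)
      (fun v => mul_le_mul_of_nonneg_right (hφC _) (Real.exp_pos _).le)
  constructor
  · exact mul_pos (Real.rpow_pos_of_pos (by positivity) _) hS
  · calc (2 * π) ^ (-(M : ℝ) / 2) * (∫ v, φ (y + t • v) * Real.exp (-‖v‖ ^ 2 / 2))
        ≤ (2 * π) ^ (-(M : ℝ) / 2) * (C * (2 * π) ^ ((M : ℝ) / 2)) :=
          mul_le_mul_of_nonneg_left hSle (Real.rpow_pos_of_pos (by positivity) _).le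
      _ = C * ((2 * π) ^ (-(M : ℝ) / 2) * (2 * π) ^ ((M : ℝ) / 2)) := by ring
      _ = C := by rw [gauss2_can]; ring

lemma key_tendsto (M : ℕ) (φ : EuclideanSpace ℝ (Fin M) → ℝ) (hφc : Continuous φ)
    (hφpos : ∀ z, 0 < φ z) {C : ℝ} (hφC : ∀ z, φ z ≤ C)
    (y : EuclideanSpace ℝ (Fin M)) :
    Tendsto (fun t : ℝ => (2 * π * t ^ 2) ^ (-(M : ℝ) / 2) *
        ∫ z, φ z * Real.exp (-‖y - z‖ ^ 2 / (2 * t ^ 2)))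
      (nhdsWithin 0 (Set.Ioi 0)) (nhds (φ y)) := by
  have hDCT : Tendsto (fun t : ℝ => ∫ v : EuclideanSpace ℝ (Fin M),
      φ (y + t • v) * Real.exp (-‖v‖ ^ 2 / 2)) (nhdsWithin 0 (Set.Ioi 0))
      (nhds (∫ v : EuclideanSpace ℝ (Fin M), φ y * Real.exp (-‖v‖ ^ 2 / 2))) := by
    refine tendsto_integral_filter_of_dominated_convergence
      (fun v => C * Real.exp (-‖v‖ ^ 2 / 2)) ?_ ?_ ((gauss2_int M).const_mul C) ?_
    · exact Filter.Eventually.of_forall fun t =>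
        Continuous.aestronglyMeasurable (by fun_prop)
    · refine Filter.Eventually.of_forall fun t => Filter.Eventually.of_forall fun v => ?_
      rw [Real.norm_eq_abs, abs_of_nonneg (mul_nonneg (hφpos _).le (Real.exp_pos _).le)]
      exact mul_le_mul_of_nonneg_right (hφC _) (Real.exp_pos _).le
    · refine Filter.Eventually.of_forall fun v => ?_
      have hc : Continuous fun t : ℝ => φ (y + t • v) * Real.exp (-‖v‖ ^ 2 / 2) := by
        fun_prop
      have h0 : Tendsto (fun t : ℝ => φ (y + t • v) * Real.exp (-‖v‖ ^ 2 / 2))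
          (nhdsWithin 0 (Set.Ioi 0)) (nhds (φ (y + (0:ℝ) • v) * Real.exp (-‖v‖ ^ 2 / 2))) :=
        (hc.tendsto 0).mono_left nhdsWithin_le_nhds
      simpa using h0
  have hval : (∫ v : EuclideanSpace ℝ (Fin M), φ y * Real.exp (-‖v‖ ^ 2 / 2))
      = φ y * (2 * π) ^ ((M : ℝ) / 2) := by
    rw [integral_const_mul, gauss2_val]
  have h2 : Tendsto (fun t : ℝ => (2 * π) ^ (-(M : ℝ) / 2) *
      ∫ v : EuclideanSpace ℝ (Fin M), φ (y + t • v) * Real.exp (-‖v‖ ^ 2 / 2))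
      (nhdsWithin 0 (Set.Ioi 0)) (nhds (φ y)) := by
    have := hDCT.const_mul ((2 * π : ℝ) ^ (-(M : ℝ) / 2))
    rw [hval] at this
    convert this using 2
    rw [← mul_assoc, mul_comm ((2 * π : ℝ) ^ (-(M : ℝ) / 2)) (φ y), mul_assoc, gauss2_can]
    ring
  refine Tendsto.congr' ?_ h2
  filter_upwards [eventually_mem_nhdsWithin] with t ht
  exact (key_id M φ y ht).symm

lemma key_meas {N M : ℕ} (φ : EuclideanSpace ℝ (Fin M) → ℝ) (hφc : Continuous φ)
    (D : EuclideanSpace ℝ (Fin N) →ₗ[ℝ] EuclideanSpace ℝ (Fin M)) (t : ℝ) :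
    StronglyMeasurable fun x : EuclideanSpace ℝ (Fin N) =>
      ∫ z, φ z * Real.exp (-‖D x - z‖ ^ 2 / (2 * t ^ 2)) := by
  have hD : Continuous D := D.continuous_of_finiteDimensional
  have hc : Continuous fun q : EuclideanSpace ℝ (Fin N) × EuclideanSpace ℝ (Fin M) =>
      φ q.2 * Real.exp (-‖D q.1 - q.2‖ ^ 2 / (2 * t ^ 2)) := by
    refine (hφc.comp continuous_snd).mul (Real.continuous_exp.comp ?_)
    exact ((((hD.comp continuous_fst).sub continuous_snd).norm.pow 2).neg).div_const _
  exact hc.stronglyMeasurable.integral_prod_right'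

lemma measure_toReal {N : ℕ} (q : EuclideanSpace ℝ (Fin N) → ℝ) (hq0 : ∀ x, 0 ≤ q x)
    (hqi : Integrable q) {A : Set (EuclideanSpace ℝ (Fin N))} (hA : MeasurableSet A) :
    (((∫⁻ x, ENNReal.ofReal (q x))⁻¹ •
      volume.withDensity fun x => ENNReal.ofReal (q x)) A).toReal
      = (∫ x in A, q x) / ∫ x, q x := by
  rw [Measure.smul_apply, withDensity_apply _ hA, smul_eq_mul,
    ← ofReal_integral_eq_lintegral_ofReal hqi (Filter.Eventually.of_forall hq0),
    ← ofReal_integral_eq_lintegral_ofReal hqi.restrict (Filter.Eventually.of_forall hq0),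
    ENNReal.toReal_mul, ENNReal.toReal_inv, ENNReal.toReal_ofReal (integral_nonneg hq0),
    ENNReal.toReal_ofReal (integral_nonneg hq0), div_eq_mul_inv]
  ring

end AuxSec

/-- Multi-term AXDA marginal convergence (Appendix A): the measure `π_η` with density
proportional to `exp(−h−f) ∏_i (2πη_i²)^{−M_i/2} ∫ exp(−g_i(z)) exp(−‖D_i x−z‖²/(2η_i²)) dz`
converges to `π` (density proportional to `exp(−h−f−∑_i g_i∘D_i)`) in total variation
as `max_i η_i → 0⁺`, i.e. as `η → 0` within the positive orthant of `ℝ^I`. `f` takes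
values in `(−∞,∞]`, encoded as an `EReal`-valued function never equal to `⊥`, with
`exp(−f(x))` interpreted as `0` when `f(x) = ⊤`. -/
theorem stmt19 (N I : ℕ) (hN : 1 ≤ N) (hI : 1 ≤ I) (Mi : Fin I → ℕ) (hMi : ∀ i, 1 ≤ Mi i)
    (D : ∀ i, EuclideanSpace ℝ (Fin N) →ₗ[ℝ] EuclideanSpace ℝ (Fin (Mi i)))
    (h : EuclideanSpace ℝ (Fin N) → ℝ) (hh : Measurable h)
    (f : EuclideanSpace ℝ (Fin N) → EReal) (hf : Measurable f)
    (hfbot : ∀ x, f x ≠ ⊥)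
    (ef : EuclideanSpace ℝ (Fin N) → ℝ)
    (hef : ∀ x, ef x = Real.exp (-h x) *
      (if f x = ⊤ then 0 else Real.exp (-(f x).toReal)))
    (hint : Integrable ef) (hpos : 0 < ∫ x, ef x)
    (g : ∀ i, EuclideanSpace ℝ (Fin (Mi i)) → ℝ) (hg : ∀ i, Continuous (g i))
    (hgb : ∀ i, ∃ C, ∀ z, Real.exp (-g i z) ≤ C)
    (p : EuclideanSpace ℝ (Fin N) → ℝ)
    (hp : ∀ x, p x = ef x * Real.exp (-∑ i, g i (D i x)))
    (pe : (Fin I → ℝ) → EuclideanSpace ℝ (Fin N) → ℝ)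
    (hpe : ∀ η x, pe η x = ef x * ∏ i, ((2 * Real.pi * η i ^ 2) ^ (-(Mi i : ℝ) / 2) *
        ∫ z, Real.exp (-g i z) * Real.exp (-‖D i x - z‖ ^ 2 / (2 * η i ^ 2))))
    (π : Measure (EuclideanSpace ℝ (Fin N)))
    (hπ : π = (∫⁻ x, ENNReal.ofReal (p x))⁻¹ •
        volume.withDensity fun x => ENNReal.ofReal (p x))
    (πe : (Fin I → ℝ) → Measure (EuclideanSpace ℝ (Fin N)))
    (hπe : ∀ η, πe η = (∫⁻ x, ENNReal.ofReal (pe η x))⁻¹ •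
        volume.withDensity fun x => ENNReal.ofReal (pe η x)) :
    Tendsto (fun η : Fin I → ℝ =>
        ⨆ A : {A : Set (EuclideanSpace ℝ (Fin N)) // MeasurableSet A},
          |(π A.1).toReal - (πe η A.1).toReal|)
      (nhdsWithin 0 {η : Fin I → ℝ | ∀ i, 0 < η i}) (nhds 0) := by
  classical
  set L := nhdsWithin (0 : Fin I → ℝ) {η : Fin I → ℝ | ∀ i, 0 < η i} with hL
  choose C hC using hgb
  have hCpos : ∀ i, 0 < C i := fun i => (Real.exp_pos _).trans_le (hC i 0)
  have hφc : ∀ i, Continuous fun z => Real.exp (-g i z) :=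
    fun i => Real.continuous_exp.comp (hg i).neg
  have hφpos : ∀ i (z : EuclideanSpace ℝ (Fin (Mi i))), 0 < Real.exp (-g i z) :=
    fun i z => Real.exp_pos _
  let K : (i : Fin I) → ℝ → EuclideanSpace ℝ (Fin N) → ℝ := fun i t x =>
    (2 * Real.pi * t ^ 2) ^ (-(Mi i : ℝ) / 2) *
      ∫ z, Real.exp (-g i z) * Real.exp (-‖D i x - z‖ ^ 2 / (2 * t ^ 2))
  have hpe' : ∀ η x, pe η x = ef x * ∏ i, K i (η i) x := hpe
  have hef0 : ∀ x, 0 ≤ ef x := by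
    intro x
    rw [hef]
    positivity
  have hKpos : ∀ i (x : EuclideanSpace ℝ (Fin N)) {t : ℝ}, 0 < t → 0 < K i t x := fun i x {t} ht =>
    (key_bounds (Mi i) _ (hφc i) (hφpos i) (hC i) (D i x) ht).1
  have hKle : ∀ i (x : EuclideanSpace ℝ (Fin N)) {t : ℝ}, 0 < t → K i t x ≤ C i := fun i x {t} ht =>
    (key_bounds (Mi i) _ (hφc i) (hφpos i) (hC i) (D i x) ht).2
  have hKsm : ∀ i t, StronglyMeasurable (fun x : EuclideanSpace ℝ (Fin N) => K i t x) := fun i t =>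
    (key_meas _ (hφc i) (D i) t).const_mul _
  have hprodexp : ∀ x : EuclideanSpace ℝ (Fin N), (∏ i, Real.exp (-g i (D i x)))
      = Real.exp (-∑ i, g i (D i x)) := by
    intro x
    rw [← Real.exp_sum]
    congr 1
    rw [← Finset.sum_neg_distrib]
  -- measurability
  have hpm : AEStronglyMeasurable p volume := by
    have hpc : Continuous fun x : EuclideanSpace ℝ (Fin N) => Real.exp (-∑ i, g i (D i x)) := by
      refine Real.continuous_exp.comp (Continuous.neg ?_)
      exact continuous_finset_sum _ fun i _ => (hg i).comp (D i).continuous_of_finiteDimensional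
    have : p = fun x => ef x * Real.exp (-∑ i, g i (D i x)) := funext hp
    rw [this]
    exact hint.aestronglyMeasurable.mul hpc.aestronglyMeasurable
  have hpem : ∀ η, AEStronglyMeasurable (pe η) volume := by
    intro η
    have : pe η = fun x => ef x * ∏ i, K i (η i) x := funext (hpe' η)
    rw [this]
    exact hint.aestronglyMeasurable.mul
      (Finset.stronglyMeasurable_fun_prod _ fun i _ => hKsm i (η i)).aestronglyMeasurable
  -- bounds
  have hp0 : ∀ x, 0 ≤ p x := by
    intro x
    rw [hp]
    exact mul_nonneg (hef0 x) (Real.exp_pos _).le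
  have hpbound : ∀ x, |p x| ≤ (∏ i, C i) * ef x := by
    intro x
    rw [abs_of_nonneg (hp0 x), hp, ← hprodexp, mul_comm]
    refine mul_le_mul_of_nonneg_right ?_ (hef0 x)
    exact Finset.prod_le_prod (fun i _ => (Real.exp_pos _).le) (fun i _ => hC i _)
  have hpe0 : ∀ η, (∀ i, 0 < η i) → ∀ x, 0 ≤ pe η x := by
    intro η hη x
    rw [hpe' η x]
    exact mul_nonneg (hef0 x) (Finset.prod_nonneg fun i _ => (hKpos i x (hη i)).le)
  have hpebound : ∀ η, (∀ i, 0 < η i) → ∀ x, |pe η x| ≤ (∏ i, C i) * ef x := by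
    intro η hη x
    rw [abs_of_nonneg (hpe0 η hη x), hpe' η x, mul_comm]
    refine mul_le_mul_of_nonneg_right ?_ (hef0 x)
    exact Finset.prod_le_prod (fun i _ => (hKpos i x (hη i)).le) (fun i _ => hKle i x (hη i))
  -- integrability
  have hCint : Integrable (fun x => (∏ i, C i) * ef x) := hint.const_mul _
  have hpint : Integrable p := by
    refine hCint.mono' hpm (Filter.Eventually.of_forall fun x => ?_)
    rw [Real.norm_eq_abs]
    exact hpbound x
  have hpeint : ∀ η, (∀ i, 0 < η i) → Integrable (pe η) := by
    intro η hη
    refine hCint.mono' (hpem η) (Filter.Eventually.of_forall fun x => ?_)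
    rw [Real.norm_eq_abs]
    exact hpebound η hη x
  -- positivity of normalizers
  have hsupp : 0 < volume (Function.support ef) :=
    (integral_pos_iff_support_of_nonneg hef0 hint).1 hpos
  have hZpos : 0 < ∫ x, p x := by
    refine (integral_pos_iff_support_of_nonneg hp0 hpint).2 ?_
    have : Function.support ef ⊆ Function.support p := by
      intro x hx
      simp only [Function.mem_support, hp] at hx ⊢
      exact mul_ne_zero hx (Real.exp_ne_zero _)
    exact hsupp.trans_le (measure_mono this)
  have hZepos : ∀ η, (∀ i, 0 < η i) → 0 < ∫ x, pe η x := by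
    intro η hη
    refine (integral_pos_iff_support_of_nonneg (hpe0 η hη) (hpeint η hη)).2 ?_
    have : Function.support ef ⊆ Function.support (pe η) := by
      intro x hx
      simp only [Function.mem_support, hpe' η] at hx ⊢
      exact mul_ne_zero hx (Finset.prod_ne_zero_iff.2 fun i _ => (hKpos i x (hη i)).ne')
    exact hsupp.trans_le (measure_mono this)
  -- measures as ratios
  have hπA : ∀ (A : Set (EuclideanSpace ℝ (Fin N))), MeasurableSet A →
      (π A).toReal = (∫ x in A, p x) / ∫ x, p x := by
    intro A hA
    rw [hπ]
    exact measure_toReal p hp0 hpint hA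
  have hπeA : ∀ η, (∀ i, 0 < η i) → ∀ (A : Set (EuclideanSpace ℝ (Fin N))), MeasurableSet A →
      (πe η A).toReal = (∫ x in A, pe η x) / ∫ x, pe η x := by
    intro η hη A hA
    rw [hπe η]
    exact measure_toReal (pe η) (hpe0 η hη) (hpeint η hη) hA
  -- pointwise convergence
  have hcoord : ∀ i, Tendsto (fun η : Fin I → ℝ => η i) L (nhdsWithin 0 (Set.Ioi 0)) := by
    intro i
    rw [tendsto_nhdsWithin_iff]
    constructor
    · have h1 : Tendsto (fun η : Fin I → ℝ => η i) L (nhds ((0 : Fin I → ℝ) i)) :=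
        ((continuous_apply i).tendsto (0 : Fin I → ℝ)).mono_left nhdsWithin_le_nhds
      simpa using h1
    · exact eventually_mem_nhdsWithin.mono fun η hη => hη i
  have htendK : ∀ i (x : EuclideanSpace ℝ (Fin N)),
      Tendsto (fun η : Fin I → ℝ => K i (η i) x) L (nhds (Real.exp (-g i (D i x)))) :=
    fun i x => (key_tendsto (Mi i) _ (hφc i) (hφpos i) (hC i) (D i x)).comp (hcoord i)
  have htendpe : ∀ x, Tendsto (fun η => pe η x) L (nhds (p x)) := by
    intro x
    have h1 : Tendsto (fun η : Fin I → ℝ => ef x * ∏ i, K i (η i) x) L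
        (nhds (ef x * ∏ i, Real.exp (-g i (D i x)))) :=
      (tendsto_finset_prod _ fun i _ => htendK i x).const_mul (ef x)
    rw [hprodexp x, ← hp x] at h1
    exact h1.congr fun η => (hpe' η x).symm
  -- convergence of normalizers
  have hZconv : Tendsto (fun η => ∫ x, pe η x) L (nhds (∫ x, p x)) := by
    refine tendsto_integral_filter_of_dominated_convergence (fun x => (∏ i, C i) * ef x)
      (Filter.Eventually.of_forall fun η => hpem η) ?_ hCint
      (Filter.Eventually.of_forall htendpe)
    refine eventually_mem_nhdsWithin.mono fun η hη => Filter.Eventually.of_forall fun x => ?_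
    rw [Real.norm_eq_abs]
    exact hpebound η hη x
  have habs : Tendsto (fun η => ∫ x, ‖pe η x - p x‖) L (nhds 0) := by
    have h0 : Tendsto (fun η => ∫ x, ‖pe η x - p x‖) L (nhds (∫ _ : EuclideanSpace ℝ (Fin N), (0:ℝ))) := by
      refine tendsto_integral_filter_of_dominated_convergence
        (fun x => 2 * ((∏ i, C i) * ef x))
        (Filter.Eventually.of_forall fun η => ((hpem η).sub hpm).norm) ?_
        (hCint.const_mul 2) ?_
      · refine eventually_mem_nhdsWithin.mono fun η hη =>
          Filter.Eventually.of_forall fun x => ?_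
        rw [norm_norm]
        calc ‖pe η x - p x‖ ≤ ‖pe η x‖ + ‖p x‖ := norm_sub_le _ _
          _ ≤ (∏ i, C i) * ef x + (∏ i, C i) * ef x := by
              rw [Real.norm_eq_abs, Real.norm_eq_abs]
              exact add_le_add (hpebound η hη x) (hpbound x)
          _ = 2 * ((∏ i, C i) * ef x) := by ring
      · refine Filter.Eventually.of_forall fun x => ?_
        have h1 : Tendsto (fun η => ‖pe η x - p x‖) L (nhds ‖p x - p x‖) :=
          ((htendpe x).sub (tendsto_const_nhds (x := p x))).norm
        simpa using h1
    simpa using h0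
  -- final bound
  have key : ∀ η, (∀ i, 0 < η i) → ∀ (A : Set (EuclideanSpace ℝ (Fin N))), MeasurableSet A →
      |(π A).toReal - (πe η A).toReal| ≤
        ((∫ x, ‖pe η x - p x‖) + |(∫ x, pe η x) - ∫ x, p x|) / ∫ x, p x := by
    intro η hη A hA
    have hZη := hZepos η hη
    rw [hπA A hA, hπeA η hη A hA]
    set Z := ∫ x, p x
    set Zη := ∫ x, pe η x
    set a := ∫ x in A, p x with ha
    set b := ∫ x in A, pe η x with hb
    have hb0 : 0 ≤ b := integral_nonneg fun x => hpe0 η hη x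
    have hbZ : b ≤ Zη := setIntegral_le_integral (hpeint η hη)
      (Filter.Eventually.of_forall (hpe0 η hη))
    have hnormint : Integrable (fun x => ‖pe η x - p x‖) := ((hpeint η hη).sub hpint).norm
    have hab : |a - b| ≤ ∫ x, ‖pe η x - p x‖ := by
      have h1 : a - b = ∫ x in A, (p x - pe η x) :=
        (integral_sub hpint.restrict (hpeint η hη).restrict).symm
      rw [h1, ← Real.norm_eq_abs]
      calc ‖∫ x in A, (p x - pe η x)‖ ≤ ∫ x in A, ‖p x - pe η x‖ :=
            norm_integral_le_integral_norm _
        _ = ∫ x in A, ‖pe η x - p x‖ := by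
            refine integral_congr_ae (Filter.Eventually.of_forall fun x => ?_)
            exact norm_sub_rev _ _
        _ ≤ ∫ x, ‖pe η x - p x‖ := setIntegral_le_integral hnormint
            (Filter.Eventually.of_forall fun x => norm_nonneg _)
    have h2 : a / Z - b / Zη = (a - b) / Z + b * (Zη - Z) / (Zη * Z) := by
      field_simp
      ring
    rw [h2]
    refine (abs_add_le _ _).trans ?_
    have h3 : |b * (Zη - Z) / (Zη * Z)| ≤ |Zη - Z| / Z := by
      rw [abs_div, abs_of_pos (mul_pos hZη hZpos), abs_mul, abs_of_nonneg hb0,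
        div_le_div_iff₀ (mul_pos hZη hZpos) hZpos]
      have h4 : b * |Zη - Z| ≤ Zη * |Zη - Z| :=
        mul_le_mul_of_nonneg_right hbZ (abs_nonneg _)
      nlinarith [abs_nonneg (Zη - Z)]
    rw [add_div]
    refine add_le_add ?_ h3
    rw [abs_div, abs_of_pos hZpos]
    exact (div_le_div_iff_of_pos_right hZpos).2 hab
  -- squeeze
  have hnonempty : Nonempty {A : Set (EuclideanSpace ℝ (Fin N)) // MeasurableSet A} := ⟨⟨∅, MeasurableSet.empty⟩⟩
  have hB : Tendsto (fun η => ((∫ x, ‖pe η x - p x‖) + |(∫ x, pe η x) - ∫ x, p x|) / ∫ x, p x)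
      L (nhds 0) := by
    have h2 : Tendsto (fun η => |(∫ x, pe η x) - ∫ x, p x|) L (nhds 0) := by
      have := (hZconv.sub (tendsto_const_nhds (x := ∫ x, p x))).abs
      simpa using this
    have := (habs.add h2).div_const (∫ x, p x)
    simpa using this
  refine tendsto_of_tendsto_of_tendsto_of_le_of_le' tendsto_const_nhds hB ?_ ?_
  · exact Filter.Eventually.of_forall fun η => Real.iSup_nonneg fun A => abs_nonneg _
  · exact eventually_mem_nhdsWithin.mono fun η hη => ciSup_le fun A => key η hη A.1 A.2
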